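/- Let λ₁, λ₂, λ₃, λ₄ be real numbers with λ₃ ≠ λ₄, 2λ₃+λ₁ ≠ λ₂, 2λ₄+λ₁ ≠ λ₂, 2λ₃+λ₁ ≠ 0, 2λ₄+λ₁ ≠ 0 and λ₂ ≠ 0. Then the fractional triple intersection number ⟨C₂,C₂,C₂⟩ = ∑_{p=1}^{4} b_p³/(e_p·(−2a_p)) equals (1/2)·(λ₁λ₃² + λ₁λ₃λ₄ + λ₁λ₄² + 2λ₃λ₄² + 2λ₃²λ₄) / ((2λ₃+λ₁)(2λ₄+λ₁)λ₂). -/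

import Mathlib

/-- Fractional triple intersection number ⟨C₂,C₂,C₂⟩ of K_{F₂} via localization:
∑ₚ bₚ³/(eₚ·(−2aₚ)) = (1/2)(λ₁λ₃² + λ₁λ₃λ₄ + λ₁λ₄² + 2λ₃λ₄² + 2λ₃²λ₄)
/ ((2λ₃+λ₁)(2λ₄+λ₁)λ₂). -/
theorem KF2_triple_222
    (l1 l2 l3 l4 : ℝ)
    (h34 : l3 ≠ l4)
    (h3 : 2 * l3 + l1 ≠ l2) (h4 : 2 * l4 + l1 ≠ l2)
    (hn3 : 2 * l3 + l1 ≠ 0) (hn4 : 2 * l4 + l1 ≠ 0) (hn2 : l2 ≠ 0) :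
    l3 ^ 3 / ((2 * l3 + l1 - l2) * (l3 - l4) * (-2 * (2 * l3 + l1)))
      + l4 ^ 3 / ((2 * l4 + l1 - l2) * (l4 - l3) * (-2 * (2 * l4 + l1)))
      + l3 ^ 3 / ((l2 - 2 * l3 - l1) * (l3 - l4) * (-2 * l2))
      + l4 ^ 3 / ((l2 - 2 * l4 - l1) * (l4 - l3) * (-2 * l2))
    = (1 / 2) * (l1 * l3 ^ 2 + l1 * l3 * l4 + l1 * l4 ^ 2 + 2 * l3 * l4 ^ 2 + 2 * l3 ^ 2 * l4)
        / ((2 * l3 + l1) * (2 * l4 + l1) * l2) := by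
  have h34' : l3 - l4 ≠ 0 := sub_ne_zero.mpr h34
  have h43' : l4 - l3 ≠ 0 := sub_ne_zero.mpr (Ne.symm h34)
  have h3' : 2 * l3 + l1 - l2 ≠ 0 := sub_ne_zero.mpr h3
  have h4' : 2 * l4 + l1 - l2 ≠ 0 := sub_ne_zero.mpr h4
  have h3'' : l2 - 2 * l3 - l1 ≠ 0 := by intro h; apply h3'; linarith
  have h4'' : l2 - 2 * l4 - l1 ≠ 0 := by intro h; apply h4'; linarith
  have d1 : (2 * l3 + l1 - l2) * (l3 - l4) * (-2 * (2 * l3 + l1)) ≠ 0 :=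
    mul_ne_zero (mul_ne_zero h3' h34') (mul_ne_zero (by norm_num) hn3)
  have d2 : (2 * l4 + l1 - l2) * (l4 - l3) * (-2 * (2 * l4 + l1)) ≠ 0 :=
    mul_ne_zero (mul_ne_zero h4' h43') (mul_ne_zero (by norm_num) hn4)
  have d3 : (l2 - 2 * l3 - l1) * (l3 - l4) * (-2 * l2) ≠ 0 :=
    mul_ne_zero (mul_ne_zero h3'' h34') (mul_ne_zero (by norm_num) hn2)
  have d4 : (l2 - 2 * l4 - l1) * (l4 - l3) * (-2 * l2) ≠ 0 :=
    mul_ne_zero (mul_ne_zero h4'' h43') (mul_ne_zero (by norm_num) hn2)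
  have d5 : (2 * l3 + l1) * (2 * l4 + l1) * l2 ≠ 0 := mul_ne_zero (mul_ne_zero hn3 hn4) hn2
  rw [div_add_div _ _ d1 d2, div_add_div _ _ (mul_ne_zero d1 d2) d3,
    div_add_div _ _ (mul_ne_zero (mul_ne_zero d1 d2) d3) d4,
    div_eq_div_iff (mul_ne_zero (mul_ne_zero (mul_ne_zero d1 d2) d3) d4) d5]
  ring
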